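/- Let H be a real inner product space, S a nonempty finite set partitioned into nonempty classes S_y for y in a finite set Y. For each class y fix a sampling distribution P_y on S_y and an integer b_y ≥ 1, let X_{y,1}, …, X_{y,b_y} be random elements of S_y each with law P_y, with the entire family {X_{y,i}} mutually independent, and define the batch gradient estimator G = Σ_{y∈Y} (|S_y|/|S|)·(1/b_y)·Σ_{i=1}^{b_y} g(X_{y,i})/(|S_y|·P_y(X_{y,i})), where g : S → H. Then V[G] = Σ_{y∈Y} α_y·(β_y − γ_y), where α_y = |S_y|²/(|S|²·b_y), β_y = Σ_{x∈S_y} ‖g(x)‖²/(|S_y|²·P_y(x)), and γ_y = ‖(1/|S_y|)·Σ_{x∈S_y} g(x)‖². -/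

import Mathlib

open Finset

section aux
variable {H : Type*} [NormedAddCommGroup H] [InnerProductSpace ℝ H]
variable {ι : Type*} [Fintype ι] [DecidableEq ι] {Ω : ι → Type*} [∀ i, Fintype (Ω i)]

omit [(i : ι) → Fintype (Ω i)] in
lemma gv_update_prod (q : ∀ i, Ω i → ℝ) (j : ι) (v : Ω j → ℝ) (w : ∀ i, Ω i) :
    ∏ i, Function.update q j v i (w i) = v (w j) * ∏ i ∈ univ.erase j, q i (w i) := by
  rw [← Finset.mul_prod_erase univ (fun i => Function.update q j v i (w i)) (mem_univ j)]
  simp only [Function.update_self]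
  congr 1
  exact Finset.prod_congr rfl (fun i hi => by
    rw [Function.update_of_ne (Finset.mem_erase.1 hi).1])

lemma gv_marg_raw (q : ∀ i, Ω i → ℝ) (j : ι) (φ : Ω j → ℝ) :
    ∑ ω : ∀ i, Ω i, (∏ i, q i (ω i)) * φ (ω j)
      = (∑ x, q j x * φ x) * ∏ i ∈ univ.erase j, ∑ x, q i x := by
  classical
  have key : ∀ ω : ∀ i, Ω i, (∏ i, q i (ω i)) * φ (ω j)
      = ∏ i, Function.update q j (fun x => q j x * φ x) i (ω i) := by
    intro ω
    rw [gv_update_prod,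
      ← Finset.mul_prod_erase univ (fun i => q i (ω i)) (mem_univ j)]
    ring
  rw [Finset.sum_congr rfl (fun ω _ => key ω),
    (Fintype.prod_sum (fun i x => Function.update q j (fun x => q j x * φ x) i x)).symm,
    ← Finset.mul_prod_erase univ
      (fun i => ∑ x, Function.update q j (fun x => q j x * φ x) i x) (mem_univ j)]
  simp only [Function.update_self]
  congr 1
  exact Finset.prod_congr rfl (fun i hi => Finset.sum_congr rfl (fun x _ => by
    rw [Function.update_of_ne (Finset.mem_erase.1 hi).1]))

lemma gv_marg_one (q : ∀ i, Ω i → ℝ) (hq : ∀ i, ∑ x, q i x = 1)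
    (j : ι) (φ : Ω j → ℝ) :
    ∑ ω : ∀ i, Ω i, (∏ i, q i (ω i)) * φ (ω j) = ∑ x, q j x * φ x := by
  rw [gv_marg_raw, Finset.prod_eq_one (fun i _ => hq i), mul_one]

lemma gv_marg_two (q : ∀ i, Ω i → ℝ) (hq : ∀ i, ∑ x, q i x = 1)
    {j k : ι} (hjk : j ≠ k) (φ : Ω j → ℝ) (ψ : Ω k → ℝ) :
    ∑ ω : ∀ i, Ω i, (∏ i, q i (ω i)) * (φ (ω j) * ψ (ω k))
      = (∑ x, q j x * φ x) * (∑ y, q k y * ψ y) := by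
  classical
  have raw := gv_marg_raw (Ω := Ω) (Function.update q j (fun x => q j x * φ x)) k ψ
  have lhs_eq : ∀ ω : ∀ i, Ω i,
      (∏ i, Function.update q j (fun x => q j x * φ x) i (ω i)) * ψ (ω k)
      = (∏ i, q i (ω i)) * (φ (ω j) * ψ (ω k)) := by
    intro ω
    rw [gv_update_prod, ← Finset.mul_prod_erase univ (fun i => q i (ω i)) (mem_univ j)]
    ring
  rw [Finset.sum_congr rfl (fun ω _ => (lhs_eq ω).symm), raw,
    Function.update_of_ne hjk.symm,
    ← Finset.mul_prod_erase (univ.erase k)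
      (fun i => ∑ x, Function.update q j (fun x => q j x * φ x) i x)
      (Finset.mem_erase.2 ⟨hjk, mem_univ j⟩)]
  simp only [Function.update_self]
  rw [Finset.prod_eq_one (fun i hi => ?_)]
  · ring
  · have hij : i ≠ j := (Finset.mem_erase.1 hi).1
    rw [Finset.sum_congr rfl (fun x _ => by rw [Function.update_of_ne hij])]
    exact hq i
end aux

section aux2
open RealInnerProductSpace
variable {H : Type*} [NormedAddCommGroup H] [InnerProductSpace ℝ H]
variable {ι : Type*} [Fintype ι] [DecidableEq ι] {Ω : ι → Type*} [∀ i, Fintype (Ω i)]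

lemma gv_marg_vec (q : ∀ i, Ω i → ℝ) (hq : ∀ i, ∑ x, q i x = 1)
    (j : ι) (F : Ω j → H) :
    ∑ ω : ∀ i, Ω i, (∏ i, q i (ω i)) • F (ω j) = ∑ x, q j x • F x := by
  apply ext_inner_left ℝ
  intro v
  simp only [inner_sum, real_inner_smul_right]
  exact gv_marg_one q hq j (fun x => ⟪v, F x⟫)

lemma gv_cross (q : ∀ i, Ω i → ℝ) (hq : ∀ i, ∑ x, q i x = 1)
    {j k : ι} (hjk : j ≠ k) (F : Ω j → H) (F' : Ω k → H) :
    ∑ ω : ∀ i, Ω i, (∏ i, q i (ω i)) * ⟪F (ω j), F' (ω k)⟫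
      = ⟪∑ x, q j x • F x, ∑ y, q k y • F' y⟫ := by
  classical
  have expand : ∀ ω : ∀ i, Ω i, ⟪F (ω j), F' (ω k)⟫
      = ∑ x : Ω j, (if ω j = x then (1:ℝ) else 0) * ⟪F x, F' (ω k)⟫ := by
    intro ω
    rw [Finset.sum_eq_single (ω j)]
    · simp
    · intro x _ hx; simp [Ne.symm hx]
    · intro h; exact absurd (mem_univ _) h
  calc ∑ ω : ∀ i, Ω i, (∏ i, q i (ω i)) * ⟪F (ω j), F' (ω k)⟫
      = ∑ ω : ∀ i, Ω i, ∑ x : Ω j, (∏ i, q i (ω i)) *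
          ((if ω j = x then (1:ℝ) else 0) * ⟪F x, F' (ω k)⟫) := by
        apply Finset.sum_congr rfl; intro ω _
        rw [expand ω, Finset.mul_sum]
    _ = ∑ x : Ω j, ∑ ω : ∀ i, Ω i, (∏ i, q i (ω i)) *
          ((if ω j = x then (1:ℝ) else 0) * ⟪F x, F' (ω k)⟫) := Finset.sum_comm
    _ = ∑ x : Ω j, (∑ x' : Ω j, q j x' * (if x' = x then (1:ℝ) else 0)) *
          (∑ y, q k y * ⟪F x, F' y⟫) := by
        apply Finset.sum_congr rfl; intro x _
        exact gv_marg_two q hq hjk (fun x' => if x' = x then (1:ℝ) else 0)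
          (fun y => ⟪F x, F' y⟫)
    _ = ∑ x : Ω j, q j x * ∑ y, q k y * ⟪F x, F' y⟫ := by
        apply Finset.sum_congr rfl; intro x _
        congr 1
        simp
    _ = ⟪∑ x, q j x • F x, ∑ y, q k y • F' y⟫ := by
        simp only [sum_inner, inner_sum, real_inner_smul_left, real_inner_smul_right,
          Finset.mul_sum]
        rw [Finset.sum_comm]
        exact Finset.sum_congr rfl fun x _ => Finset.sum_congr rfl fun y _ => by ring

lemma gv_var_sum (q : ∀ i, Ω i → ℝ) (hq : ∀ i, ∑ x, q i x = 1)
    (F : ∀ j, Ω j → H) :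
    (∑ ω : ∀ i, Ω i, (∏ i, q i (ω i)) * ‖∑ j, F j (ω j)‖ ^ 2)
      - ‖∑ ω : ∀ i, Ω i, (∏ i, q i (ω i)) • ∑ j, F j (ω j)‖ ^ 2
    = ∑ j, ((∑ x, q j x * ‖F j x‖ ^ 2) - ‖∑ x, q j x • F j x‖ ^ 2) := by
  classical
  set E : ∀ j, H := fun j => ∑ x, q j x • F j x with hE
  have mean : ∑ ω : ∀ i, Ω i, (∏ i, q i (ω i)) • ∑ j, F j (ω j) = ∑ j, E j := by
    rw [show (∑ ω : ∀ i, Ω i, (∏ i, q i (ω i)) • ∑ j, F j (ω j))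
        = ∑ j, ∑ ω : ∀ i, Ω i, (∏ i, q i (ω i)) • F j (ω j) by
      rw [← Finset.sum_comm]
      exact Finset.sum_congr rfl fun ω _ => Finset.smul_sum]
    exact Finset.sum_congr rfl fun j _ => gv_marg_vec q hq j (F j)
  have norm_expand : ∀ ω : ∀ i, Ω i, ‖∑ j, F j (ω j)‖ ^ 2
      = ∑ j, ∑ k, ⟪F j (ω j), F k (ω k)⟫ := by
    intro ω
    rw [← real_inner_self_eq_norm_sq]
    simp only [sum_inner, inner_sum]
    exact Finset.sum_comm
  have snd : ∑ ω : ∀ i, Ω i, (∏ i, q i (ω i)) * ‖∑ j, F j (ω j)‖ ^ 2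
      = ∑ j, ∑ k, ((if j = k then ∑ x, q j x * ‖F j x‖ ^ 2 else ⟪E j, E k⟫)) := by
    calc ∑ ω : ∀ i, Ω i, (∏ i, q i (ω i)) * ‖∑ j, F j (ω j)‖ ^ 2
        = ∑ j, ∑ k, ∑ ω : ∀ i, Ω i, (∏ i, q i (ω i)) * ⟪F j (ω j), F k (ω k)⟫ := by
          simp only [norm_expand, Finset.mul_sum]
          rw [Finset.sum_comm]
          exact Finset.sum_congr rfl fun j _ => Finset.sum_comm
      _ = ∑ j, ∑ k, ((if j = k then ∑ x, q j x * ‖F j x‖ ^ 2 else ⟪E j, E k⟫)) := by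
          apply Finset.sum_congr rfl; intro j _
          apply Finset.sum_congr rfl; intro k _
          by_cases h : j = k
          · subst h
            rw [if_pos rfl, ← gv_marg_one q hq j (fun x => ‖F j x‖ ^ 2)]
            exact Finset.sum_congr rfl fun ω _ => by rw [real_inner_self_eq_norm_sq]
          · rw [if_neg h]
            exact gv_cross q hq h (F j) (F k)
  have meansq : ‖∑ j, E j‖ ^ 2 = ∑ j, ∑ k, ⟪E j, E k⟫ := by
    rw [← real_inner_self_eq_norm_sq]
    simp only [sum_inner, inner_sum]
    exact Finset.sum_comm
  rw [snd, mean, meansq, ← Finset.sum_sub_distrib]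
  apply Finset.sum_congr rfl; intro j _
  rw [← Finset.sum_sub_distrib, Finset.sum_eq_single j]
  · simp [real_inner_self_eq_norm_sq]; rfl
  · intro k _ hk
    rw [if_neg (Ne.symm hk), sub_self]
  · intro h; exact absurd (mem_univ _) h
end aux2




/-- Theorem 2 (Gradient Variance Decomposition): the variance of the stratified
  importance-weighted batch gradient estimator decomposes as `∑_y α_y·(β_y - γ_y)`.
The classes are the fibers of the class-label map `cl : S → Y` (surjective, so each
class is nonempty), and the family of samples is realized on the finite product space
`∀ y, Fin (b y) → {x // cl x = y}` with product law (mutual independence).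
The variance of an `H`-valued random variable is `E[‖X‖²] - ‖E[X]‖²`. -/
theorem gradient_variance_decomposition
    {H : Type*} [NormedAddCommGroup H] [InnerProductSpace ℝ H]
    {S Y : Type*} [Fintype S] [Nonempty S] [Fintype Y] [DecidableEq Y]
    (cl : S → Y) (hcl : Function.Surjective cl)
    (g : S → H) (P : (y : Y) → {x // cl x = y} → ℝ)
    (hP : ∀ y x, 0 < P y x)
    (hPsum : ∀ y, ∑ x : {x // cl x = y}, P y x = 1)
    (b : Y → ℕ) (hb : ∀ y, 1 ≤ b y) :
    (∑ ω : (y : Y) → Fin (b y) → {x // cl x = y},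
        (∏ y, ∏ i, P y (ω y i)) *
        ‖∑ y, ((Fintype.card {x // cl x = y} : ℝ) / (Fintype.card S : ℝ)) •
            ((b y : ℝ)⁻¹ • ∑ i,
              ((Fintype.card {x // cl x = y} : ℝ) * P y (ω y i))⁻¹ • g (ω y i))‖ ^ 2)
      - ‖∑ ω : (y : Y) → Fin (b y) → {x // cl x = y},
          (∏ y, ∏ i, P y (ω y i)) •
          (∑ y, ((Fintype.card {x // cl x = y} : ℝ) / (Fintype.card S : ℝ)) •
            ((b y : ℝ)⁻¹ • ∑ i,
              ((Fintype.card {x // cl x = y} : ℝ) * P y (ω y i))⁻¹ • g (ω y i)))‖ ^ 2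
    = ∑ y, ((Fintype.card {x // cl x = y} : ℝ) ^ 2
            / ((Fintype.card S : ℝ) ^ 2 * (b y : ℝ))) *
        ((∑ x : {x // cl x = y},
            ‖g x‖ ^ 2 / ((Fintype.card {x // cl x = y} : ℝ) ^ 2 * P y x))
          - ‖(Fintype.card {x // cl x = y} : ℝ)⁻¹ • ∑ x : {x // cl x = y}, g x‖ ^ 2) := by
  classical
  -- notation
  set c : Y → ℝ := fun y => (Fintype.card {x // cl x = y} : ℝ) with hc
  set cS : ℝ := (Fintype.card S : ℝ) with hcS
  have hcpos : ∀ y, 0 < c y := fun y => by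
    have : Nonempty {x // cl x = y} := ⟨⟨(hcl y).choose, (hcl y).choose_spec⟩⟩
    exact Nat.cast_pos.mpr Fintype.card_pos
  have hcSpos : (0:ℝ) < cS := Nat.cast_pos.mpr Fintype.card_pos
  have hBpos : ∀ y, (0:ℝ) < (b y : ℝ) := fun y => by exact_mod_cast hb y
  -- the sigma-indexed family
  let ι := (y : Y) × Fin (b y)
  let Ω : ι → Type _ := fun j => {x // cl x = j.1}
  let q : ∀ j : ι, Ω j → ℝ := fun j => P j.1
  have hq : ∀ j : ι, ∑ x, q j x = 1 := fun j => hPsum j.1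
  let F : ∀ j : ι, Ω j → H := fun j x =>
    (c j.1 / cS) • ((b j.1 : ℝ)⁻¹ • ((c j.1 * P j.1 x)⁻¹ • g x))
  have main := gv_var_sum q hq F
  -- transfer sums via the curry equivalence
  let e : (∀ j : ι, Ω j) ≃ ((y : Y) → Fin (b y) → {x // cl x = y}) :=
    Equiv.piCurry fun y _ => {x // cl x = y}
  have hprod : ∀ ω' : ∀ j : ι, Ω j,
      (∏ j, q j (ω' j)) = ∏ y, ∏ i, P y (e ω' y i) := by
    intro ω'
    rw [← Finset.univ_sigma_univ, Finset.prod_sigma]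
    rfl
  have hsum : ∀ ω' : ∀ j : ι, Ω j,
      (∑ j, F j (ω' j)) = ∑ y, (c y / cS) •
        ((b y : ℝ)⁻¹ • ∑ i, (c y * P y (e ω' y i))⁻¹ • g (e ω' y i)) := by
    intro ω'
    rw [← Finset.univ_sigma_univ, Finset.sum_sigma]
    refine Finset.sum_congr rfl fun y _ => ?_
    rw [Finset.smul_sum, Finset.smul_sum]
    rfl
  have L1 : ∑ ω : (y : Y) → Fin (b y) → {x // cl x = y},
      (∏ y, ∏ i, P y (ω y i)) *
      ‖∑ y, (c y / cS) • ((b y : ℝ)⁻¹ • ∑ i, (c y * P y (ω y i))⁻¹ • g (ω y i))‖ ^ 2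
      = ∑ ω' : ∀ j : ι, Ω j, (∏ j, q j (ω' j)) * ‖∑ j, F j (ω' j)‖ ^ 2 := by
    refine (Fintype.sum_equiv e _ _ fun ω' => ?_).symm
    rw [hprod, hsum]
  have L2 : ∑ ω : (y : Y) → Fin (b y) → {x // cl x = y},
      (∏ y, ∏ i, P y (ω y i)) •
      (∑ y, (c y / cS) • ((b y : ℝ)⁻¹ • ∑ i, (c y * P y (ω y i))⁻¹ • g (ω y i)))
      = ∑ ω' : ∀ j : ι, Ω j, (∏ j, q j (ω' j)) • ∑ j, F j (ω' j) := by
    refine (Fintype.sum_equiv e _ _ fun ω' => ?_).symm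
    rw [hprod, hsum]
  rw [L1, L2, main]
  -- collapse the sigma sum on the RHS
  rw [← Finset.univ_sigma_univ, Finset.sum_sigma]
  refine Finset.sum_congr rfl fun y _ => ?_
  -- per-class computation
  have hcne := (hcpos y).ne'
  have hBne := (hBpos y).ne'
  have hcSne := hcSpos.ne'
  have step : ∑ i : Fin (b y),
      ((∑ x, q ⟨y, i⟩ x * ‖F ⟨y, i⟩ x‖ ^ 2) - ‖∑ x, q ⟨y, i⟩ x • F ⟨y, i⟩ x‖ ^ 2)
      = (b y : ℝ) * ((∑ x : {x // cl x = y}, P y x *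
            ‖(c y / cS) • ((b y : ℝ)⁻¹ • ((c y * P y x)⁻¹ • g x))‖ ^ 2)
          - ‖∑ x : {x // cl x = y}, P y x •
              ((c y / cS) • ((b y : ℝ)⁻¹ • ((c y * P y x)⁻¹ • g x)))‖ ^ 2) := by
    have e1 : ∀ i : Fin (b y),
        ((∑ x, q ⟨y, i⟩ x * ‖F ⟨y, i⟩ x‖ ^ 2) - ‖∑ x, q ⟨y, i⟩ x • F ⟨y, i⟩ x‖ ^ 2)
        = ((∑ x : {x // cl x = y}, P y x *
              ‖(c y / cS) • ((b y : ℝ)⁻¹ • ((c y * P y x)⁻¹ • g x))‖ ^ 2)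
            - ‖∑ x : {x // cl x = y}, P y x •
                ((c y / cS) • ((b y : ℝ)⁻¹ • ((c y * P y x)⁻¹ • g x)))‖ ^ 2) :=
      fun i => rfl
    rw [Finset.sum_congr rfl (fun i _ => e1 i), Finset.sum_const, Finset.card_univ,
      Fintype.card_fin, nsmul_eq_mul]
  rw [step]
  have hβ : ∑ x : {x // cl x = y}, P y x *
      ‖(c y / cS) • ((b y : ℝ)⁻¹ • ((c y * P y x)⁻¹ • g x))‖ ^ 2
      = (c y / cS * (b y : ℝ)⁻¹)^2 *
        ∑ x : {x // cl x = y}, ‖g x‖^2 / ((c y)^2 * P y x) := by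
    rw [Finset.mul_sum]
    refine Finset.sum_congr rfl fun x _ => ?_
    rw [smul_smul, smul_smul, norm_smul, Real.norm_eq_abs, mul_pow, sq_abs]
    have hPne := (hP y x).ne'
    field_simp
  have hmean : ∑ x : {x // cl x = y}, P y x •
      ((c y / cS) • ((b y : ℝ)⁻¹ • ((c y * P y x)⁻¹ • g x)))
      = (c y / cS * (b y : ℝ)⁻¹) • ((c y)⁻¹ • ∑ x : {x // cl x = y}, g x) := by
    rw [smul_smul, Finset.smul_sum]
    refine Finset.sum_congr rfl fun x _ => ?_
    rw [smul_smul, smul_smul, smul_smul]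
    congr 1
    have hPne := (hP y x).ne'
    field_simp
  rw [hβ, hmean, norm_smul, Real.norm_eq_abs,
    mul_pow (|c y / cS * ((b y : ℝ))⁻¹|), sq_abs]
  simp only [hc, hcS]
  set κ : ℝ := (Fintype.card {x // cl x = y} : ℝ) with hκ
  set σ : ℝ := (Fintype.card S : ℝ) with hσ
  set SB : ℝ := ∑ x : {x // cl x = y}, ‖g x‖^2 / (κ^2 * P y x) with hSB
  set SG : ℝ := ‖κ⁻¹ • ∑ x : {x // cl x = y}, g x‖ ^ 2 with hSG
  have hκne : κ ≠ 0 := by rw [hκ]; exact hcne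
  have hσne : σ ≠ 0 := by rw [hσ]; exact hcSne
  have key : (b y : ℝ) * (κ / σ * (b y : ℝ)⁻¹)^2 = κ^2 / (σ^2 * (b y : ℝ)) := by
    field_simp
  linear_combination (SB - SG) * key
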